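/- Fix R > 0 and define P_R : ℝ^d → ℝ^d by P_R(x) = x / (1 + (max(‖x‖ − R, 0))² / (8 (max(R,1))²)). Then for every x ∈ ℝ^d one has ‖P_R(x)‖ ≤ min(2 max(R,1), ‖x‖); moreover P_R is Fréchet differentiable at every x and the operator norm of its derivative satisfies ‖DP_R(x)‖_op ≤ 2. -/

import Mathlib

/-- The projection map `P_R(x) = x / (1 + (‖x‖ − R)₊² / (8 (R ∨ 1)²))`. -/
noncomputable def projR {d : ℕ} (R : ℝ) (x : EuclideanSpace ℝ (Fin d)) :
    EuclideanSpace ℝ (Fin d) :=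
  (1 + (max (‖x‖ - R) 0) ^ 2 / (8 * (max R 1) ^ 2))⁻¹ • x

lemma posPart_sq_hasDerivAt (s : ℝ) :
    HasDerivAt (fun t : ℝ => max t 0 ^ 2) (2 * max s 0) s := by
  rcases lt_trichotomy s 0 with h | h | h
  · have heq : (fun t : ℝ => max t 0 ^ 2) =ᶠ[nhds s] fun _ => (0 : ℝ) := by
      filter_upwards [Iio_mem_nhds h] with t ht
      simp [max_eq_right (le_of_lt (Set.mem_Iio.mp ht))]
    have := (hasDerivAt_const s (0 : ℝ)).congr_of_eventuallyEq heq
    simpa [max_eq_right h.le] using this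
  · subst h
    rw [hasDerivAt_iff_isLittleO]
    simp only [max_self, mul_zero, smul_zero, sub_zero]
    rw [Asymptotics.isLittleO_iff]
    intro c hc
    filter_upwards [Metric.ball_mem_nhds (0 : ℝ) hc] with t ht
    have ht' : |t| < c := by simpa [Real.dist_eq] using ht
    have h1 : max t 0 ≤ |t| := max_le (le_abs_self t) (abs_nonneg t)
    have h0 : (0 : ℝ) ≤ max t 0 := le_max_right _ _
    have : max t 0 ^ 2 ≤ |t| * |t| := by nlinarith
    calc ‖max t 0 ^ 2 - 0 ^ 2‖ = max t 0 ^ 2 := by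
          simp [abs_of_nonneg (pow_nonneg h0 2)]
      _ ≤ |t| * |t| := this
      _ ≤ c * ‖t‖ := by
          rw [Real.norm_eq_abs]
          exact mul_le_mul_of_nonneg_right ht'.le (abs_nonneg t)
  · have heq : (fun t : ℝ => max t 0 ^ 2) =ᶠ[nhds s] fun t => t ^ 2 := by
      filter_upwards [Ioi_mem_nhds h] with t ht
      simp [max_eq_left (le_of_lt (Set.mem_Ioi.mp ht))]
    have h2 : HasDerivAt (fun t : ℝ => t ^ 2) (2 * s) s := by
      simpa using (hasDerivAt_pow 2 s)
    have := h2.congr_of_eventuallyEq heq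
    simpa [max_eq_left h.le] using this

set_option maxHeartbeats 1000000 in
/-- For every `x`, `‖P_R x‖ ≤ min (2 (R ∨ 1)) ‖x‖`, `P_R` is Fréchet differentiable at `x`,
and `‖DP_R(x)‖_op ≤ 2`. -/
theorem stmt_0 {d : ℕ} (R : ℝ) (hR : 0 < R) (x : EuclideanSpace ℝ (Fin d)) :
    ‖projR R x‖ ≤ min (2 * max R 1) ‖x‖ ∧
      DifferentiableAt ℝ (projR (d := d) R) x ∧
      ‖fderiv ℝ (projR (d := d) R) x‖ ≤ 2 := by
  set M : ℝ := max R 1 with hMdef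
  have hM1 : (1 : ℝ) ≤ M := le_max_right _ _
  have hM0 : (0 : ℝ) < M := lt_of_lt_of_le one_pos hM1
  have hRM : R ≤ M := le_max_left _ _
  set g : EuclideanSpace ℝ (Fin d) → ℝ := fun y => 1 + max (‖y‖ - R) 0 ^ 2 / (8 * M ^ 2) with hgdef
  have hg1 : ∀ y : EuclideanSpace ℝ (Fin d), 1 ≤ g y := by
    intro y
    have : 0 ≤ max (‖y‖ - R) 0 ^ 2 / (8 * M ^ 2) := by positivity
    simp only [hgdef]; linarith
  have hgpos : ∀ y : EuclideanSpace ℝ (Fin d), 0 < g y := fun y => lt_of_lt_of_le one_pos (hg1 y)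
  have hproj : ∀ y : EuclideanSpace ℝ (Fin d), projR R y = (g y)⁻¹ • y := fun y => rfl
  set u : ℝ := max (‖x‖ - R) 0 with hudef
  have hu0 : (0 : ℝ) ≤ u := le_max_right _ _
  have huR : ‖x‖ - R ≤ u := le_max_left _ _
  have ht0 : (0 : ℝ) ≤ ‖x‖ := norm_nonneg x
  constructor
  · -- norm bound
    rw [hproj, norm_smul, Real.norm_eq_abs, abs_of_pos (inv_pos.2 (hgpos x))]
    refine le_min ?_ ?_
    · -- key polynomial inequality : 4 M ‖x‖ ≤ 8 M² + u²
      have key1 : 4 * M * ‖x‖ ≤ 8 * M ^ 2 + u ^ 2 := by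
        rcases le_or_gt ‖x‖ (2 * M) with h | h
        · nlinarith
        · have h1 : ‖x‖ - M ≤ u := by linarith
          nlinarith [sq_nonneg (‖x‖ - 3 * M), mul_nonneg hu0 (by linarith : (0:ℝ) ≤ u - (‖x‖ - M))]
      rw [inv_mul_le_iff₀ (hgpos x)]
      have hg2 : g x * (2 * M) = (8 * M ^ 2 + u ^ 2) / (4 * M) := by
        rw [hgdef]
        field_simp
        ring
      rw [hg2, le_div_iff₀ (by positivity)]
      nlinarith
    · calc (g x)⁻¹ * ‖x‖ ≤ 1 * ‖x‖ := by
            exact mul_le_mul_of_nonneg_right (inv_le_one_of_one_le₀ (hg1 x)) ht0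
        _ = ‖x‖ := one_mul _
  · rcases lt_or_ge ‖x‖ R with hlt | hge
    · -- locally the identity
      have heq : projR (d := d) R =ᶠ[nhds x] id := by
        have hmem : {y : EuclideanSpace ℝ (Fin d) | ‖y‖ < R} ∈ nhds x := by
          have : IsOpen {y : EuclideanSpace ℝ (Fin d) | ‖y‖ < R} := by
            have : {y : EuclideanSpace ℝ (Fin d) | ‖y‖ < R} = Metric.ball (0 : EuclideanSpace ℝ (Fin d)) R := by
              ext y; simp [Metric.mem_ball, dist_zero_right]
            rw [this]; exact Metric.isOpen_ball
          exact this.mem_nhds hlt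
        filter_upwards [hmem] with y hy
        have : max (‖y‖ - R) 0 = 0 := max_eq_right (by simpa using sub_nonpos.2 hy.le)
        simp [projR, this]
      constructor
      · exact (differentiableAt_id.congr_of_eventuallyEq heq)
      · have : fderiv ℝ (projR (d := d) R) x = fderiv ℝ (id : EuclideanSpace ℝ (Fin d) → EuclideanSpace ℝ (Fin d)) x :=
          heq.fderiv_eq
        rw [this, fderiv_id]
        calc ‖ContinuousLinearMap.id ℝ (EuclideanSpace ℝ (Fin d))‖ ≤ 1 := ContinuousLinearMap.norm_id_le
          _ ≤ 2 := by norm_num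
    · -- differentiable case with explicit derivative
      have hx0 : x ≠ 0 := by
        intro h
        rw [h] at hge
        simp at hge
        linarith
      have hn : DifferentiableAt ℝ (fun y : EuclideanSpace ℝ (Fin d) => ‖y‖) x :=
        (contDiffAt_norm (n := 1) ℝ hx0).differentiableAt one_ne_zero
      set f : EuclideanSpace ℝ (Fin d) →L[ℝ] ℝ := fderiv ℝ (fun y : EuclideanSpace ℝ (Fin d) => ‖y‖) x with hfdef
      have hf : HasFDerivAt (fun y : EuclideanSpace ℝ (Fin d) => ‖y‖) f x := hn.hasFDerivAt
      have hfn : ‖f‖ ≤ 1 := by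
        have := norm_fderiv_le_of_lipschitz (x₀ := x) ℝ lipschitzWith_one_norm
        simpa using this
      have h1 : HasFDerivAt (fun y : EuclideanSpace ℝ (Fin d) => ‖y‖ - R) f x := hf.sub_const R
      have h2 : HasDerivAt (fun t : ℝ => max t 0 ^ 2) (2 * u) (‖x‖ - R) :=
        posPart_sq_hasDerivAt (‖x‖ - R)
      have h3 : HasFDerivAt (fun y : EuclideanSpace ℝ (Fin d) => max (‖y‖ - R) 0 ^ 2) ((2 * u) • f) x :=
        by have h3' := h2.comp_hasFDerivAt x h1; exact h3'
      have h4 : HasFDerivAt g (((8 * M ^ 2)⁻¹ * (2 * u)) • f) x := by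
        have := (h3.mul_const ((8 * M ^ 2)⁻¹)).const_add 1
        have heq : (fun y : EuclideanSpace ℝ (Fin d) => 1 + max (‖y‖ - R) 0 ^ 2 * (8 * M ^ 2)⁻¹) = g := by
          funext y; simp only [hgdef]; rw [div_eq_mul_inv]
        rw [heq] at this
        rw [mul_smul]
        exact this
      have hgx : g x ≠ 0 := ne_of_gt (hgpos x)
      have h5 : HasDerivAt (fun t : ℝ => t⁻¹) (-(g x ^ 2)⁻¹) (g x) := hasDerivAt_inv hgx
      have h6 : HasFDerivAt (fun y : EuclideanSpace ℝ (Fin d) => (g y)⁻¹)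
          ((-(g x ^ 2)⁻¹) • (((8 * M ^ 2)⁻¹ * (2 * u)) • f)) x :=
        h5.comp_hasFDerivAt x h4
      set q : EuclideanSpace ℝ (Fin d) →L[ℝ] ℝ := (-(g x ^ 2)⁻¹) • (((8 * M ^ 2)⁻¹ * (2 * u)) • f) with hqdef
      set D : EuclideanSpace ℝ (Fin d) →L[ℝ] EuclideanSpace ℝ (Fin d) :=
        (g x)⁻¹ • ContinuousLinearMap.id ℝ (EuclideanSpace ℝ (Fin d)) + q.smulRight x with hDdef
      have hfun : projR (d := d) R = fun y => (g y)⁻¹ • y := funext hproj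
      have h7 : HasFDerivAt (projR (d := d) R) D x := by
        have h7' := h6.smul (hasFDerivAt_id x)
        rw [hfun]
        exact h7'
      refine ⟨h7.differentiableAt, ?_⟩
      rw [h7.fderiv]
      -- operator norm bound
      have hueq : u = ‖x‖ - R := max_eq_left (by linarith)
      have hxu : ‖x‖ ≤ u + M := by rw [hueq]; linarith
      have hpoly : 16 * M ^ 2 * (u * ‖x‖) ≤ (8 * M ^ 2 + u ^ 2) ^ 2 := by
        nlinarith [sq_nonneg (M ^ 2 - M * u), sq_nonneg (u ^ 2 - 8 * M ^ 2),
          mul_nonneg (mul_nonneg hu0 (sq_nonneg M)) (by linarith : (0:ℝ) ≤ u + M - ‖x‖),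
          mul_nonneg hu0 ht0, sq_nonneg u, sq_nonneg M]
      have hkey : u * ‖x‖ ≤ 4 * M ^ 2 * g x ^ 2 := by
        have hgx2 : 4 * M ^ 2 * g x ^ 2 = (8 * M ^ 2 + u ^ 2) ^ 2 / (16 * M ^ 2) := by
          rw [hgdef]
          field_simp
          ring
        rw [hgx2, le_div_iff₀ (by positivity)]
        nlinarith
      refine ContinuousLinearMap.opNorm_le_bound D (by norm_num) fun v => ?_
      have hDv : D v = (g x)⁻¹ • v + (q v) • x := by
        simp [hDdef]
      have hqv : |q v| ≤ (g x ^ 2)⁻¹ * ((8 * M ^ 2)⁻¹ * (2 * u)) * ‖v‖ := by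
        have : q v = (-(g x ^ 2)⁻¹) * (((8 * M ^ 2)⁻¹ * (2 * u)) * f v) := by
          simp [hqdef, mul_assoc]
        rw [this, abs_mul, abs_mul]
        have hfv : |f v| ≤ ‖v‖ := by
          calc |f v| = ‖f v‖ := rfl
            _ ≤ ‖f‖ * ‖v‖ := f.le_opNorm v
            _ ≤ 1 * ‖v‖ := mul_le_mul_of_nonneg_right hfn (norm_nonneg v)
            _ = ‖v‖ := one_mul _
        have h8 : |(-(g x ^ 2)⁻¹ : ℝ)| = (g x ^ 2)⁻¹ := by
          rw [abs_neg, abs_of_pos (inv_pos.2 (by positivity))]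
        have h9 : |((8 * M ^ 2)⁻¹ * (2 * u) : ℝ)| = (8 * M ^ 2)⁻¹ * (2 * u) := by
          rw [abs_of_nonneg (by positivity)]
        rw [h8, h9, ← mul_assoc]
        exact mul_le_mul_of_nonneg_left hfv (by positivity)
      calc ‖D v‖ = ‖(g x)⁻¹ • v + (q v) • x‖ := by rw [hDv]
        _ ≤ ‖(g x)⁻¹ • v‖ + ‖(q v) • x‖ := norm_add_le _ _
        _ = (g x)⁻¹ * ‖v‖ + |q v| * ‖x‖ := by
            rw [norm_smul, norm_smul, Real.norm_eq_abs, Real.norm_eq_abs,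
              abs_of_pos (inv_pos.2 (hgpos x))]
        _ ≤ 1 * ‖v‖ + ((g x ^ 2)⁻¹ * ((8 * M ^ 2)⁻¹ * (2 * u)) * ‖v‖) * ‖x‖ := by
            gcongr
            · exact inv_le_one_of_one_le₀ (hg1 x)
        _ ≤ 2 * ‖v‖ := by
            have hterm : (g x ^ 2)⁻¹ * ((8 * M ^ 2)⁻¹ * (2 * u)) * ‖x‖ ≤ 1 := by
              have heq2 : (g x ^ 2)⁻¹ * ((8 * M ^ 2)⁻¹ * (2 * u)) * ‖x‖
                  = (u * ‖x‖) / (4 * M ^ 2 * g x ^ 2) := by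
                field_simp
                ring
              rw [heq2]
              exact div_le_one_of_le₀ hkey (by positivity)
            nlinarith [norm_nonneg v, mul_nonneg (mul_nonneg (inv_nonneg.2 (sq_nonneg (g x)))
              (by positivity : (0:ℝ) ≤ (8 * M ^ 2)⁻¹ * (2 * u))) ht0]
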